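/- arXiv:2402.16260 — 6 statements merged into one kernel-verified Lean document; each statement's English description precedes it below -/
import Mathlib

section
/- Let n ≥ 1 and let A ∈ ℝ^{n×n} be a nonnegative matrix with zero diagonal whose directed graph is strongly connected, and let L = D − A be its Laplacian, where D = diag(d₁,…,d_n) with d_i = Σ_{j=1}^n A_{ij}. Then there exists a vector w ∈ ℝⁿ with w_i > 0 for all i such that wᵀL = 0ᵀ (i.e., Lᵀw = 0). -/
open Matrix

/-- first part of Lemma 2.5: the Laplacian `L = D − A` of a
strongly connected weighted digraph admits a strictly positive left null
vector `w`, i.e. `wᵀ L = 0ᵀ`. -/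
theorem laplacian_positive_left_null_vector
    (n : ℕ) (hn : 0 < n)
    (A : Matrix (Fin n) (Fin n) ℝ)
    (hA : ∀ i j, 0 ≤ A i j) (hAdiag : ∀ i, A i i = 0)
    (hconn : ∀ i j : Fin n, i ≠ j → Relation.TransGen (fun a c => 0 < A a c) i j)
    (L : Matrix (Fin n) (Fin n) ℝ)
    (hL : L = Matrix.diagonal (fun i => ∑ j, A i j) - A) :
    ∃ w : Fin n → ℝ, (∀ i, 0 < w i) ∧ Matrix.vecMul w L = 0 := by
  set d : Fin n → ℝ := fun i => ∑ j, A i j with hd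
  have hdnn : ∀ i, 0 ≤ d i := fun i => Finset.sum_nonneg fun j _ => hA i j
  -- rows of L sum to zero, so det L = 0
  have hrow : L *ᵥ (fun _ => (1:ℝ)) = 0 := by
    funext i
    simp only [hL, Matrix.mulVec, dotProduct, Matrix.sub_apply, Matrix.diagonal_apply,
      Pi.zero_apply, mul_one, Finset.sum_sub_distrib, Finset.sum_ite_eq]
    simp [hd]
  have hdet : L.det = 0 := by
    rw [← Matrix.exists_mulVec_eq_zero_iff]
    refine ⟨fun _ => 1, ?_, hrow⟩
    intro h
    have := congrFun h ⟨0, hn⟩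
    simpa using this
  have hdetT : Lᵀ.det = 0 := by rwa [Matrix.det_transpose]
  obtain ⟨v, hv0, hvnull⟩ := (Matrix.exists_mulVec_eq_zero_iff).mpr hdetT
  have hvL : v ᵥ* L = 0 := by rwa [Matrix.mulVec_transpose] at hvnull
  -- the balance equations
  have key : ∀ j, v j * d j = ∑ i, v i * A i j := by
    intro j
    have := congrFun hvL j
    simp only [Matrix.vecMul, dotProduct, hL, Matrix.sub_apply,
      Matrix.diagonal_apply, Pi.zero_apply, mul_sub, Finset.sum_sub_distrib,
      mul_ite, mul_zero] at this
    rw [Finset.sum_ite_eq' Finset.univ j (fun i => v i * d i)] at this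
    simp at this
    linarith [this]
  -- |v| also satisfies the balance equations
  have keyabs : ∀ j, |v j| * d j = ∑ i, |v i| * A i j := by
    have hle : ∀ j ∈ Finset.univ, |v j| * d j ≤ ∑ i, |v i| * A i j := by
      intro j _
      calc |v j| * d j = |v j * d j| := by
            rw [abs_mul, abs_of_nonneg (hdnn j)]
        _ = |∑ i, v i * A i j| := by rw [key j]
        _ ≤ ∑ i, |v i * A i j| := Finset.abs_sum_le_sum_abs _ _
        _ = ∑ i, |v i| * A i j := by
            refine Finset.sum_congr rfl fun i _ => ?_
            rw [abs_mul, abs_of_nonneg (hA i j)]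
    have hsum : ∑ j, |v j| * d j = ∑ j, ∑ i, |v i| * A i j := by
      rw [Finset.sum_comm]
      refine Finset.sum_congr rfl fun i _ => ?_
      rw [← Finset.mul_sum]
    exact fun j => (Finset.sum_eq_sum_iff_of_le hle).mp hsum j (Finset.mem_univ j)
  -- propagation of positivity along edges
  have step : ∀ i j, 0 < |v i| → 0 < A i j → 0 < |v j| := by
    intro i j hvi hij
    have h1 : 0 < ∑ k, |v k| * A k j := by
      refine lt_of_lt_of_le (mul_pos hvi hij) ?_
      exact Finset.single_le_sum (fun k _ => mul_nonneg (abs_nonneg _) (hA k j))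
        (Finset.mem_univ i)
    rw [← keyabs j] at h1
    rcases mul_pos_iff.mp h1 with ⟨h, _⟩ | ⟨h, _⟩
    · exact h
    · exact absurd h (not_lt.mpr (abs_nonneg _))
  -- |v| is strictly positive everywhere
  obtain ⟨i0, hi0⟩ := Function.ne_iff.mp hv0
  have hvi0 : 0 < |v i0| := abs_pos.mpr hi0
  have prop : ∀ a b : Fin n, Relation.TransGen (fun x y => 0 < A x y) a b →
      0 < |v a| → 0 < |v b| := by
    intro a b h
    induction h with
    | single h => exact fun ha => step _ _ ha h
    | tail _ h ih => exact fun ha => step _ _ (ih ha) h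
  have hpos : ∀ j, 0 < |v j| := by
    intro j
    by_cases hji : j = i0
    · subst hji; exact hvi0
    · exact prop i0 j (hconn i0 j (Ne.symm hji)) hvi0
  -- along edges, signs agree
  have edge : ∀ i j, 0 < A i j → 0 < v i * v j := by
    intro i j hij
    set s : ℝ := if 0 < v j then 1 else -1 with hs
    have hvjne : v j ≠ 0 := abs_pos.mp (hpos j)
    have hsvj : s * v j = |v j| := by
      by_cases h : 0 < v j
      · simp [hs, h, abs_of_pos h]
      · have hneg : v j < 0 := lt_of_le_of_ne (not_lt.mp h) hvjne
        rw [hs, if_neg h, abs_of_neg hneg]; ring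
    have hsabs : |s| = 1 := by by_cases h : 0 < v j <;> simp [hs, h]
    have hterm : ∀ k, 0 ≤ |v k| - s * v k := by
      intro k
      have : s * v k ≤ |s * v k| := le_abs_self _
      rw [abs_mul, hsabs, one_mul] at this
      linarith
    have hzero : ∑ k, (|v k| - s * v k) * A k j = 0 := by
      have e3 : ∑ k, (|v k| - s * v k) * A k j
          = (∑ k, |v k| * A k j) - s * ∑ k, v k * A k j := by
        rw [Finset.mul_sum, ← Finset.sum_sub_distrib]
        exact Finset.sum_congr rfl fun k _ => by ring
      rw [e3, ← keyabs j, ← key j,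
        show s * (v j * d j) = (s * v j) * d j from by ring, hsvj]
      ring
    have each := (Finset.sum_eq_zero_iff_of_nonneg
      (fun k _ => mul_nonneg (hterm k) (hA k j))).mp hzero
    have hi := each i (Finset.mem_univ i)
    have h1 : |v i| - s * v i = 0 := by
      rcases mul_eq_zero.mp hi with h | h
      · exact h
      · exact absurd h (ne_of_gt hij)
    have hsvi : s * v i = |v i| := by linarith
    have hs2 : s * s = 1 := by by_cases h : 0 < v j <;> simp [hs, h]
    have hmp : 0 < (s * v i) * (s * v j) := by
      rw [hsvi, hsvj]; exact mul_pos (hpos i) (hpos j)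
    calc (0:ℝ) < (s * v i) * (s * v j) := hmp
      _ = (s * s) * (v i * v j) := by ring
      _ = v i * v j := by rw [hs2, one_mul]
  -- signs agree along paths
  have conn2 : ∀ a b : Fin n, Relation.TransGen (fun x y => 0 < A x y) a b →
      0 < v a * v b := by
    intro a b h
    induction h with
    | single h => exact edge _ _ h
    | @tail m c hm hmc ih =>
      have h1 := mul_pos ih (edge _ _ hmc)
      have hm2 : 0 < v m * v m := mul_self_pos.mpr (abs_pos.mp (hpos m))
      nlinarith [h1, hm2]
  -- conclude: all entries have the sign of v i0
  have hsame : ∀ i, 0 < v i * v i0 := by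
    intro i
    by_cases hi : i = i0
    · subst hi; exact mul_self_pos.mpr (abs_pos.mp (hpos i))
    · have := conn2 i i0 (hconn i i0 hi)
      exact this
  by_cases h : 0 < v i0
  · refine ⟨v, fun i => ?_, hvL⟩
    rcases mul_pos_iff.mp (hsame i) with ⟨h1, _⟩ | ⟨_, h2⟩
    · exact h1
    · exact absurd h (not_lt.mpr (le_of_lt h2))
  · have hneg : v i0 < 0 := lt_of_le_of_ne (not_lt.mp h) (abs_pos.mp (hpos i0))
    refine ⟨-v, fun i => ?_, by rw [Matrix.neg_vecMul, hvL, neg_zero]⟩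
    rcases mul_pos_iff.mp (hsame i) with ⟨_, h2⟩ | ⟨h1, _⟩
    · exact absurd h2 (not_lt.mpr (le_of_lt hneg))
    · simpa using h1
end

section
/- Let n ≥ 1 and let A ∈ ℝ^{n×n} be a nonnegative matrix with zero diagonal whose directed graph is strongly connected, let L = D − A be its Laplacian with D = diag(Σ_j A_{1j},…,Σ_j A_{nj}), and let w ∈ ℝⁿ be a vector with all entries positive satisfying wᵀL = 0ᵀ. Let b ∈ ℝⁿ be a nonnegative vector with b_i > 0 for at least one index i. Then the symmetric matrix G = (1/2)(diag(w)·L + Lᵀ·diag(w)) + diag(w)·diag(b) is positive definite, i.e., xᵀGx > 0 for all nonzero x ∈ ℝⁿ. -/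
open Matrix

/-- second part of Lemma 2.5: with `w > 0` a left null vector of
the Laplacian `L` of a strongly connected weighted digraph and `b ≥ 0` with at
least one positive entry, the symmetric matrix
`G = (1/2)(diag(w)L + Lᵀdiag(w)) + diag(w)diag(b)` is positive definite. -/
theorem G_positive_definite
    (n : ℕ) (hn : 0 < n)
    (A : Matrix (Fin n) (Fin n) ℝ)
    (hA : ∀ i j, 0 ≤ A i j) (hAdiag : ∀ i, A i i = 0)
    (hconn : ∀ i j : Fin n, i ≠ j → Relation.TransGen (fun a c => 0 < A a c) i j)
    (L : Matrix (Fin n) (Fin n) ℝ)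
    (hL : L = Matrix.diagonal (fun i => ∑ j, A i j) - A)
    (w : Fin n → ℝ) (hw : ∀ i, 0 < w i)
    (hwL : Matrix.vecMul w L = 0)
    (b : Fin n → ℝ) (hb : ∀ i, 0 ≤ b i) (hbpos : ∃ i, 0 < b i)
    (G : Matrix (Fin n) (Fin n) ℝ)
    (hG : G = (1/2 : ℝ) • (Matrix.diagonal w * L + Lᵀ * Matrix.diagonal w)
        + Matrix.diagonal w * Matrix.diagonal b) :
    ∀ x : Fin n → ℝ, x ≠ 0 → 0 < x ⬝ᵥ G.mulVec x := by
  -- the left-null-vector identity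
  have hnull : ∀ j, ∑ i, w i * A i j = w j * ∑ k, A j k := by
    intro j
    have h0 := congrFun hwL j
    rw [hL] at h0
    simp only [Matrix.vecMul, dotProduct, Matrix.sub_apply, Matrix.diagonal_apply,
      Pi.zero_apply, mul_sub, Finset.sum_sub_distrib, mul_ite, mul_zero] at h0
    simp only [Finset.sum_ite_eq', Finset.mem_univ, if_true] at h0
    linarith [h0]
  have hGij : ∀ i j, G i j = (1/2) * (w i * L i j + L j i * w j)
      + (if i = j then w i * b i else 0) := by
    intro i j
    rw [hG]
    rcases eq_or_ne i j with h | h <;>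
      simp [Matrix.add_apply, Matrix.smul_apply, Matrix.diagonal_mul, Matrix.mul_diagonal,
        Matrix.transpose_apply, Matrix.diagonal_apply, smul_eq_mul, h] <;> ring
  have hLij : ∀ i j, L i j = (if i = j then ∑ k, A i k else 0) - A i j := by
    intro i j; rw [hL]; simp [Matrix.sub_apply, Matrix.diagonal_apply]
  -- key quadratic form identity
  have key : ∀ x : Fin n → ℝ, x ⬝ᵥ G.mulVec x
      = (∑ i, ∑ j, w i * A i j * (x i - x j)^2) / 2 + ∑ i, w i * b i * x i ^ 2 := by
    intro x
    have lhs : x ⬝ᵥ G.mulVec x = ∑ i, ∑ j, x i * G i j * x j := by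
      simp [dotProduct, Matrix.mulVec, Finset.mul_sum, mul_assoc]
    rw [lhs]
    have step1 : ∀ i j : Fin n, x i * G i j * x j
        = (1/2) * (w i * L i j * (x i * x j)) + (1/2) * (L j i * w j * (x i * x j))
          + (if i = j then w i * b i * x i ^ 2 else 0) := by
      intro i j
      rw [hGij]
      rcases eq_or_ne i j with h | h <;> simp [h] <;> ring
    simp only [step1, Finset.sum_add_distrib, Finset.sum_ite_eq, Finset.sum_ite_eq',
      Finset.mem_univ, if_true]
    have hcomm : ∑ i, ∑ j, (1/2 : ℝ) * (L j i * w j * (x i * x j))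
        = ∑ i, ∑ j, (1/2 : ℝ) * (w i * L i j * (x i * x j)) := by
      rw [Finset.sum_comm]
      apply Finset.sum_congr rfl; intro i _
      apply Finset.sum_congr rfl; intro j _; ring
    rw [hcomm]
    -- now LHS = 2 * (1/2) * ∑∑ w i L i j x i x j + b-term
    have hLsum : ∑ i, ∑ j, w i * L i j * (x i * x j)
        = ∑ i, w i * (∑ k, A i k) * x i ^ 2 - ∑ i, ∑ j, w i * A i j * (x i * x j) := by
      rw [← Finset.sum_sub_distrib]
      apply Finset.sum_congr rfl; intro i _
      have : ∀ j, w i * L i j * (x i * x j)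
          = (if i = j then w i * (∑ k, A i k) * x i ^ 2 else 0) - w i * A i j * (x i * x j) := by
        intro j
        rw [hLij]
        rcases eq_or_ne i j with h | h <;> simp [h] <;> ring
      simp only [this, Finset.sum_sub_distrib, Finset.sum_ite_eq, Finset.mem_univ, if_true]
    have hsq : ∑ i, ∑ j, w i * A i j * (x i - x j)^2
        = 2 * (∑ i, w i * (∑ k, A i k) * x i ^ 2) - 2 * ∑ i, ∑ j, w i * A i j * (x i * x j) := by
      have expand : ∀ i j : Fin n, w i * A i j * (x i - x j)^2
          = w i * A i j * x i ^ 2 + w i * A i j * x j ^ 2 - 2 * (w i * A i j * (x i * x j)) := by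
        intro i j; ring
      simp only [expand, Finset.sum_sub_distrib, Finset.sum_add_distrib]
      have Sa : ∑ i, ∑ j, w i * A i j * x i ^ 2 = ∑ i, w i * (∑ k, A i k) * x i ^ 2 := by
        apply Finset.sum_congr rfl; intro i _
        rw [Finset.mul_sum, Finset.sum_mul]
      have Sb : ∑ i, ∑ j, w i * A i j * x j ^ 2 = ∑ i, w i * (∑ k, A i k) * x i ^ 2 := by
        rw [Finset.sum_comm]
        apply Finset.sum_congr rfl; intro j _
        have : ∑ i, w i * A i j * x j ^ 2 = (∑ i, w i * A i j) * x j ^ 2 := by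
          rw [Finset.sum_mul]
        rw [this, hnull j]
      have Sc : ∑ i, ∑ j, 2 * (w i * A i j * (x i * x j))
          = 2 * ∑ i, ∑ j, w i * A i j * (x i * x j) := by
        simp only [← Finset.mul_sum]
      rw [Sa, Sb, Sc]; ring
    rw [hsq]
    have hb2 : ∑ i, w i * b i * x i ^ 2 = ∑ i, w i * b i * x i ^ 2 := rfl
    have h12 : ∑ i, ∑ j, (1/2 : ℝ) * (w i * L i j * (x i * x j))
        = (1/2) * ∑ i, ∑ j, w i * L i j * (x i * x j) := by
      simp only [← Finset.mul_sum]
    rw [h12, hLsum]; ring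
  -- positivity
  intro x hx
  rw [key x]
  have term_nonneg : ∀ i j : Fin n, 0 ≤ w i * A i j * (x i - x j)^2 := fun i j =>
    mul_nonneg (mul_nonneg (hw i).le (hA i j)) (sq_nonneg _)
  have sum1_nonneg : 0 ≤ ∑ i, ∑ j, w i * A i j * (x i - x j)^2 :=
    Finset.sum_nonneg fun i _ => Finset.sum_nonneg fun j _ => term_nonneg i j
  have sum2_nonneg : 0 ≤ ∑ i, w i * b i * x i ^ 2 :=
    Finset.sum_nonneg fun i _ => mul_nonneg (mul_nonneg (hw i).le (hb i)) (sq_nonneg _)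
  by_cases hc : ∃ i j : Fin n, 0 < A i j ∧ x i ≠ x j
  · obtain ⟨i, j, hij, hne⟩ := hc
    have hne0 : x i - x j ≠ 0 := sub_ne_zero.mpr hne
    have hpos : 0 < w i * A i j * (x i - x j)^2 :=
      mul_pos (mul_pos (hw i) hij) (by positivity)
    have h1 : 0 < ∑ i, ∑ j, w i * A i j * (x i - x j)^2 := by
      have inner : 0 < ∑ k, w i * A i k * (x i - x k)^2 :=
        Finset.sum_pos' (fun k _ => term_nonneg i k) ⟨j, Finset.mem_univ j, hpos⟩
      exact Finset.sum_pos' (fun k _ => Finset.sum_nonneg fun l _ => term_nonneg k l)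
        ⟨i, Finset.mem_univ i, inner⟩
    linarith
  · push_neg at hc
    -- x is constant along edges, hence constant by strong connectivity
    have htg : ∀ i j : Fin n, Relation.TransGen (fun a c => 0 < A a c) i j → x i = x j := by
      intro i j hij
      induction hij with
      | single h' => exact hc _ _ h'
      | tail _ h' ih => exact ih.trans (hc _ _ h')
    have hconst : ∀ i j : Fin n, x i = x j := by
      intro i j
      rcases eq_or_ne i j with h | h
      · rw [h]
      · exact htg i j (hconn i j h)
    obtain ⟨i0, hi0⟩ := hbpos
    have hx0 : x i0 ≠ 0 := by
      intro h0
      apply hx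
      funext k
      rw [Pi.zero_apply, ← hconst i0 k, h0]
    have h2 : 0 < ∑ i, w i * b i * x i ^ 2 := by
      have : 0 < w i0 * b i0 * x i0 ^ 2 :=
        mul_pos (mul_pos (hw i0) hi0) (by positivity)
      exact Finset.sum_pos' (fun i _ => mul_nonneg (mul_nonneg (hw i).le (hb i)) (sq_nonneg _))
        ⟨i0, Finset.mem_univ i0, this⟩
    linarith
end

section
/- Let n ≥ 1 and let A ∈ ℝ^{n×n} be a nonnegative matrix with zero diagonal whose directed graph is strongly connected, let L = D − A be its Laplacian with D = diag(Σ_j A_{1j},…,Σ_j A_{nj}), and let b ∈ ℝⁿ be a nonnegative vector with b_i > 0 for at least one index i, B = diag(b). Then the matrix L + B is nonsingular (invertible). -/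
open Matrix

/-- Key maximum-principle lemma: if the row equations hold for a vector `x`
attaining a positive maximum, then all pinning gains vanish. -/
lemma L_plus_B_key (n : ℕ) (A : Matrix (Fin n) (Fin n) ℝ)
    (hA : ∀ i j, 0 ≤ A i j)
    (hconn : ∀ i j : Fin n, i ≠ j → Relation.TransGen (fun a c => 0 < A a c) i j)
    (b : Fin n → ℝ) (hb : ∀ i, 0 ≤ b i)
    (x : Fin n → ℝ)
    (heq : ∀ i, ∑ j, A i j * (x i - x j) + b i * x i = 0)
    (i0 : Fin n) (hmax : ∀ j, x j ≤ x i0) (hpos : 0 < x i0) :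
    ∀ i, b i = 0 := by
  have hS : ∀ i, x i = x i0 → (b i = 0 ∧ ∀ j, 0 < A i j → x j = x i0) := by
    intro i hi
    have h1 : ∀ j ∈ Finset.univ, 0 ≤ A i j * (x i - x j) := fun j _ =>
      mul_nonneg (hA i j) (by rw [hi]; linarith [hmax j])
    have hsum : 0 ≤ ∑ j, A i j * (x i - x j) := Finset.sum_nonneg h1
    have h2 : 0 ≤ b i * x i := mul_nonneg (hb i) (by rw [hi]; exact hpos.le)
    have hsum0 : ∑ j, A i j * (x i - x j) = 0 := by linarith [heq i]
    have hbix : b i * x i = 0 := by linarith [heq i]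
    have hbi : b i = 0 := by
      rcases mul_eq_zero.1 hbix with h | h
      · exact h
      · exfalso; rw [hi] at h; linarith
    refine ⟨hbi, fun j hj => ?_⟩
    have := (Finset.sum_eq_zero_iff_of_nonneg h1).1 hsum0 j (Finset.mem_univ j)
    rcases mul_eq_zero.1 this with h | h
    · exfalso; linarith
    · rw [← hi]; linarith
  have hreach : ∀ j, Relation.TransGen (fun a c => 0 < A a c) i0 j → x j = x i0 := by
    intro j h
    induction h with
    | single h => exact (hS i0 rfl).2 _ h
    | tail _ h ih => exact (hS _ ih).2 _ h
  have hall : ∀ j, x j = x i0 := by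
    intro j
    by_cases hji : j = i0
    · rw [hji]
    · exact hreach j (hconn i0 j (Ne.symm hji))
  intro i
  exact (hS i (hall i)).1

/-- for a strongly connected weighted digraph with Laplacian `L`
and a nonnegative pinning vector `b` with at least one positive entry,
the matrix `L + B` (with `B = diag(b)`) is nonsingular. -/
theorem L_plus_B_invertible
    (n : ℕ) (hn : 0 < n)
    (A : Matrix (Fin n) (Fin n) ℝ)
    (hA : ∀ i j, 0 ≤ A i j) (hAdiag : ∀ i, A i i = 0)
    (hconn : ∀ i j : Fin n, i ≠ j → Relation.TransGen (fun a c => 0 < A a c) i j)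
    (L : Matrix (Fin n) (Fin n) ℝ)
    (hL : L = Matrix.diagonal (fun i => ∑ j, A i j) - A)
    (b : Fin n → ℝ) (hb : ∀ i, 0 ≤ b i) (hbpos : ∃ i, 0 < b i)
    (B : Matrix (Fin n) (Fin n) ℝ) (hB : B = Matrix.diagonal b) :
    IsUnit (L + B) := by
  rw [Matrix.isUnit_iff_isUnit_det, isUnit_iff_ne_zero]
  intro hdet
  obtain ⟨x, hx0, hx⟩ := (Matrix.exists_mulVec_eq_zero_iff).2 hdet
  -- row equations
  have heq : ∀ i, ∑ j, A i j * (x i - x j) + b i * x i = 0 := by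
    intro i
    have h0 : ((L + B) *ᵥ x) i = 0 := by rw [hx]; rfl
    rw [hL, hB, Matrix.add_mulVec, Matrix.sub_mulVec] at h0
    simp only [Pi.add_apply, Pi.sub_apply, Matrix.mulVec_diagonal] at h0
    have : ∑ j, A i j * (x i - x j)
        = (∑ j, A i j) * x i - (A *ᵥ x) i := by
      simp [Matrix.mulVec, dotProduct, mul_sub, Finset.sum_sub_distrib,
        Finset.sum_mul]
    rw [this]
    linarith
  -- negation also satisfies the row equations
  have heqn : ∀ i, ∑ j, A i j * ((-x) i - (-x) j) + b i * (-x) i = 0 := by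
    intro i
    have := heq i
    simp only [Pi.neg_apply]
    have h : ∑ j, A i j * (-x i - -x j) = -∑ j, A i j * (x i - x j) := by
      rw [← Finset.sum_neg_distrib]
      apply Finset.sum_congr rfl
      intro j _; ring
    rw [h]; linarith
  obtain ⟨i0, -, hi0⟩ := Finset.exists_max_image Finset.univ (fun i => |x i|)
    ⟨⟨0, hn⟩, Finset.mem_univ _⟩
  have hc : 0 < |x i0| := by
    obtain ⟨k, hk⟩ := Function.ne_iff.1 hx0
    have := hi0 k (Finset.mem_univ k)
    have : 0 < |x k| := abs_pos.2 hk
    linarith [hi0 k (Finset.mem_univ k)]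
  obtain ⟨i, hbi⟩ := hbpos
  rcases lt_trichotomy (x i0) 0 with h | h | h
  · have := L_plus_B_key n A hA hconn b hb (-x) heqn i0
      (fun j => by
        simp only [Pi.neg_apply]
        have := hi0 j (Finset.mem_univ j)
        have h2 : |x i0| = -x i0 := abs_of_neg h
        calc -x j ≤ |x j| := neg_le_abs _
          _ ≤ -x i0 := by rw [← h2]; exact hi0 j (Finset.mem_univ j))
      (by simp only [Pi.neg_apply]; linarith)
    exact absurd (this i) (by linarith)
  · rw [h] at hc; simp at hc
  · have := L_plus_B_key n A hA hconn b hb x heq i0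
      (fun j => by
        have h2 : |x i0| = x i0 := abs_of_pos h
        calc x j ≤ |x j| := le_abs_self _
          _ ≤ x i0 := by rw [← h2]; exact hi0 j (Finset.mem_univ j))
      h
    exact absurd (this i) (by linarith)
end

section
/- For all v, y ∈ ℝ, ∫_{⌊v⌉²}^{y} (⌊s⌉^{1/2} − v) ds ≤ |y − ⌊v⌉²| · |v − ⌊y⌉^{1/2}|, i.e., the integral from sign(v)·v² to y of (sign(s)·√|s| − v) ds is at most |y − sign(v)·v²| · |v − sign(y)·√|y||. -/
noncomputable def spow (x a : ℝ) : ℝ := Real.sign x * |x| ^ a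

lemma spow_half_eq (x : ℝ) : spow x (1/2) = Real.sqrt x - Real.sqrt (-x) := by
  unfold spow
  rw [show |x| ^ (1/2 : ℝ) = Real.sqrt |x| from (Real.sqrt_eq_rpow _).symm]
  rcases lt_trichotomy x 0 with h | h | h
  · rw [Real.sign_of_neg h, abs_of_neg h,
      show Real.sqrt x = 0 from Real.sqrt_eq_zero'.mpr h.le]
    ring
  · simp [h]
  · rw [Real.sign_of_pos h, abs_of_pos h,
      show Real.sqrt (-x) = 0 from Real.sqrt_eq_zero'.mpr (by linarith)]
    ring

lemma spow_half_mono : Monotone (fun x : ℝ => spow x (1/2)) := by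
  intro a b hab
  simp only [spow_half_eq]
  have h1 : Real.sqrt a ≤ Real.sqrt b := Real.sqrt_le_sqrt hab
  have h2 : Real.sqrt (-b) ≤ Real.sqrt (-a) := Real.sqrt_le_sqrt (by linarith)
  linarith

lemma spow_half_spow_two (v : ℝ) : spow (spow v 2) (1/2) = v := by
  rcases lt_trichotomy v 0 with h | h | h
  · have h2 : spow v 2 = -(v^2) := by
      unfold spow
      rw [Real.sign_of_neg h, abs_of_neg h]
      rw [show ((-v) ^ (2:ℝ)) = (-v)^(2:ℕ) by rw [← Real.rpow_natCast]; norm_num]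
      ring
    rw [h2, spow_half_eq]
    have : Real.sqrt (-(v^2)) = 0 := Real.sqrt_eq_zero'.mpr (by nlinarith)
    rw [this, neg_neg, Real.sqrt_sq_eq_abs, abs_of_neg h]
    ring
  · simp [h, spow]
  · have h2 : spow v 2 = v^2 := by
      unfold spow
      rw [Real.sign_of_pos h, abs_of_pos h]
      rw [show (v ^ (2:ℝ)) = v^(2:ℕ) by rw [← Real.rpow_natCast]; norm_num]
      ring
    rw [h2, spow_half_eq]
    have : Real.sqrt (-(v^2)) = 0 := Real.sqrt_eq_zero'.mpr (by nlinarith)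
    rw [Real.sqrt_sq_eq_abs, abs_of_pos h, this]
    ring

/-- inequality (23): the Lyapunov summand
`∫_{⌊v⌉²}^{y} (⌊s⌉^{1/2} − v) ds` is at most `|y − ⌊v⌉²| · |v − ⌊y⌉^{1/2}|`. -/
theorem lyapunov_summand_upper_bound (v y : ℝ) :
    (∫ s in (spow v 2)..y, (spow s (1/2) - v)) ≤ |y - spow v 2| * |v - spow y (1/2)| := by
  set a := spow v 2 with ha
  have key : ∀ x ∈ Set.uIoc a y, ‖spow x (1/2) - v‖ ≤ |v - spow y (1/2)| := by
    intro x hx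
    have h1 : min a y ≤ x := le_of_lt hx.1
    have h2 : x ≤ max a y := hx.2
    have hfa : spow a (1/2) = v := spow_half_spow_two v
    have hmin : min (spow a (1/2)) (spow y (1/2)) ≤ spow x (1/2) := by
      rcases le_total a y with h | h
      · exact le_trans (min_le_left _ _) (spow_half_mono (by simpa [min_eq_left h] using h1))
      · exact le_trans (min_le_right _ _) (spow_half_mono (by simpa [min_eq_right h] using h1))
    have hmax : spow x (1/2) ≤ max (spow a (1/2)) (spow y (1/2)) := by
      rcases le_total a y with h | h
      · exact le_trans (spow_half_mono (by simpa [max_eq_right h] using h2)) (le_max_right _ _)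
      · exact le_trans (spow_half_mono (by simpa [max_eq_left h] using h2)) (le_max_left _ _)
    rw [hfa] at hmin hmax
    rw [Real.norm_eq_abs, abs_sub_le_iff]
    constructor
    · rcases le_total v (spow y (1/2)) with h | h
      · calc spow x (1/2) - v ≤ max v (spow y (1/2)) - v := by linarith [hmax]
          _ = spow y (1/2) - v := by rw [max_eq_right h]
          _ ≤ |v - spow y (1/2)| := by rw [abs_sub_comm]; exact le_abs_self _
      · have : spow x (1/2) ≤ v := by rw [max_eq_left h] at hmax; exact hmax
        calc spow x (1/2) - v ≤ 0 := by linarith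
          _ ≤ _ := abs_nonneg _
    · rcases le_total v (spow y (1/2)) with h | h
      · have : v ≤ spow x (1/2) := by rw [min_eq_left h] at hmin; exact hmin
        calc v - spow x (1/2) ≤ 0 := by linarith
          _ ≤ _ := abs_nonneg _
      · calc v - spow x (1/2) ≤ v - min v (spow y (1/2)) := by linarith [hmin]
          _ = v - spow y (1/2) := by rw [min_eq_right h]
          _ ≤ |v - spow y (1/2)| := le_abs_self _
  have hb := intervalIntegral.norm_integral_le_of_norm_le_const key
  calc (∫ s in a..y, (spow s (1/2) - v)) ≤ ‖∫ s in a..y, (spow s (1/2) - v)‖ := by rw [Real.norm_eq_abs]; exact le_abs_self _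
    _ ≤ |v - spow y (1/2)| * |y - a| := hb
    _ = |y - a| * |v - spow y (1/2)| := mul_comm _ _
end

section
/- For all v, y ∈ ℝ, |y − ⌊v⌉²| ≤ 3·|v|² + 2·|v − ⌊y⌉^{1/2}|², i.e., |y − sign(v)·v²| ≤ 3v² + 2(v − sign(y)·√|y|)². -/
/-- inequality (15): `|y − ⌊v⌉²| ≤ 3|v|² + 2|v − ⌊y⌉^{1/2}|²`. -/
theorem ineq_15 (v y : ℝ) :
    |y - spow v 2| ≤ 3 * |v| ^ 2 + 2 * |v - spow y (1/2)| ^ 2 := by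
  have hv2 : spow v 2 = Real.sign v * v ^ 2 := by
    unfold spow
    rw [show ((2:ℝ)) = ((2:ℕ):ℝ) by norm_num, Real.rpow_natCast, sq_abs]
  have hy2 : spow y (1/2) = Real.sign y * Real.sqrt |y| := by
    unfold spow
    rw [Real.sqrt_eq_rpow]
  set s := Real.sqrt |y| with hs
  have hs0 : 0 ≤ s := Real.sqrt_nonneg _
  have hs2 : s ^ 2 = |y| := Real.sq_sqrt (abs_nonneg y)
  rw [hv2, hy2, sq_abs, sq_abs]
  rcases lt_trichotomy y 0 with hy | hy | hy
  · rw [Real.sign_of_neg hy]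
    have hys : s ^ 2 = -y := by rw [hs2, abs_of_neg hy]
    rcases lt_trichotomy v 0 with hv | hv | hv
    · rw [Real.sign_of_neg hv, abs_le]
      constructor <;> nlinarith [sq_nonneg (v + s), sq_nonneg v, mul_nonneg hs0 (neg_nonneg.mpr hv.le)]
    · subst hv; rw [Real.sign_zero, abs_le]; constructor <;> nlinarith
    · rw [Real.sign_of_pos hv, abs_le]
      constructor <;> nlinarith [mul_nonneg hs0 hv.le, sq_nonneg (v + s)]
  · subst hy
    simp only [Real.sign_zero, zero_mul, zero_sub, abs_neg, sub_zero]
    rcases lt_trichotomy v 0 with hv | hv | hv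
    · rw [Real.sign_of_neg hv, abs_le]; constructor <;> nlinarith [sq_nonneg v]
    · subst hv; simp
    · rw [Real.sign_of_pos hv, abs_le]; constructor <;> nlinarith [sq_nonneg v]
  · rw [Real.sign_of_pos hy]
    have hys : s ^ 2 = y := by rw [hs2, abs_of_pos hy]
    rcases lt_trichotomy v 0 with hv | hv | hv
    · rw [Real.sign_of_neg hv, abs_le]
      constructor <;> nlinarith [mul_nonneg hs0 (neg_nonneg.mpr hv.le), sq_nonneg (v - s)]
    · subst hv; rw [Real.sign_zero, abs_le]; constructor <;> nlinarith
    · rw [Real.sign_of_pos hv, abs_le]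
      constructor <;> nlinarith [mul_nonneg hs0 hv.le, sq_nonneg (v - s)]
end

section
/- For all v, y ∈ ℝ, |y − ⌊v⌉²| · |v − ⌊y⌉^{1/2}| ≤ 2·|v|³ + 3·|v − ⌊y⌉^{1/2}|³, i.e., |y − sign(v)·v²| · |v − sign(y)·√|y|| ≤ 2|v|³ + 3|v − sign(y)·√|y||³. -/
lemma spow_two (x : ℝ) : spow x 2 = Real.sign x * x ^ 2 := by
  unfold spow
  rw [show ((2:ℝ)) = ((2:ℕ):ℝ) by norm_num, Real.rpow_natCast, sq_abs]

lemma spow_spow_half (y : ℝ) : spow (spow y (1/2)) 2 = y := by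
  rcases lt_trichotomy y 0 with h | h | h
  · have h1 : spow y (1/2) = -(|y| ^ ((1:ℝ)/2)) := by
      unfold spow; rw [Real.sign_of_neg h]; ring
    have hpos : (0:ℝ) < |y| ^ ((1:ℝ)/2) := Real.rpow_pos_of_pos (abs_pos.2 h.ne) _
    rw [spow_two, h1, Real.sign_of_neg (by linarith)]
    have : (|y| ^ ((1:ℝ)/2)) ^ 2 = |y| := by
      rw [← Real.rpow_natCast (|y| ^ ((1:ℝ)/2)) 2, ← Real.rpow_mul (abs_nonneg y)]
      norm_num
    rw [neg_sq, this, abs_of_neg h]; ring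
  · simp [h, spow, Real.sign_zero]
  · have h1 : spow y (1/2) = |y| ^ ((1:ℝ)/2) := by
      unfold spow; rw [Real.sign_of_pos h]; ring
    have hpos : (0:ℝ) < |y| ^ ((1:ℝ)/2) := Real.rpow_pos_of_pos (abs_pos.2 h.ne') _
    rw [spow_two, h1, Real.sign_of_pos hpos]
    have : (|y| ^ ((1:ℝ)/2)) ^ 2 = |y| := by
      rw [← Real.rpow_natCast (|y| ^ ((1:ℝ)/2)) 2, ← Real.rpow_mul (abs_nonneg y)]
      norm_num
    rw [this, abs_of_pos h]; ring

lemma abs_spow_two_sub (a b : ℝ) : |spow a 2 - spow b 2| ≤ (|a| + |b|) * |a - b| := by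
  rw [spow_two, spow_two]
  rcases lt_trichotomy a 0 with ha | ha | ha <;> rcases lt_trichotomy b 0 with hb | hb | hb
  · rw [Real.sign_of_neg ha, Real.sign_of_neg hb, abs_of_neg ha, abs_of_neg hb]
    rcases abs_cases (-1 * a ^ 2 - -1 * b ^ 2) with ⟨h, _⟩ | ⟨h, _⟩ <;>
      rcases abs_cases (a - b) with ⟨h2, _⟩ | ⟨h2, _⟩ <;> rw [h, h2] <;> nlinarith
  · subst hb; simp [abs_of_neg ha, Real.sign_of_neg ha]; nlinarith
  · rw [Real.sign_of_neg ha, Real.sign_of_pos hb, abs_of_neg ha, abs_of_pos hb]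
    rcases abs_cases (-1 * a ^ 2 - 1 * b ^ 2) with ⟨h, _⟩ | ⟨h, _⟩ <;>
      rcases abs_cases (a - b) with ⟨h2, _⟩ | ⟨h2, _⟩ <;> rw [h, h2] <;> nlinarith
  · subst ha; simp [abs_of_neg hb, Real.sign_of_neg hb]; nlinarith
  · subst ha; subst hb; simp
  · subst ha; simp [abs_of_pos hb, Real.sign_of_pos hb]; nlinarith
  · rw [Real.sign_of_pos ha, Real.sign_of_neg hb, abs_of_pos ha, abs_of_neg hb]
    rcases abs_cases (1 * a ^ 2 - -1 * b ^ 2) with ⟨h, _⟩ | ⟨h, _⟩ <;>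
      rcases abs_cases (a - b) with ⟨h2, _⟩ | ⟨h2, _⟩ <;> rw [h, h2] <;> nlinarith
  · subst hb; simp [abs_of_pos ha, Real.sign_of_pos ha]; nlinarith
  · rw [Real.sign_of_pos ha, Real.sign_of_pos hb, abs_of_pos ha, abs_of_pos hb]
    rcases abs_cases (1 * a ^ 2 - 1 * b ^ 2) with ⟨h, _⟩ | ⟨h, _⟩ <;>
      rcases abs_cases (a - b) with ⟨h2, _⟩ | ⟨h2, _⟩ <;> rw [h, h2] <;> nlinarith

/-- inequality (24):
`|y − ⌊v⌉²|·|v − ⌊y⌉^{1/2}| ≤ 2|v|³ + 3|v − ⌊y⌉^{1/2}|³`. -/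
theorem ineq_24 (v y : ℝ) :
    |y - spow v 2| * |v - spow y (1/2)| ≤ 2 * |v| ^ 3 + 3 * |v - spow y (1/2)| ^ 3 := by
  set w := spow y (1/2) with hw
  have hy : y = spow w 2 := (spow_spow_half y).symm
  have h1 : |y - spow v 2| ≤ (|w| + |v|) * |w - v| := by
    rw [hy]; exact abs_spow_two_sub w v
  have h2 : |w - v| = |v - w| := abs_sub_comm w v
  have h3 : |w| ≤ |v| + |v - w| := by
    have := abs_sub_abs_le_abs_sub w v
    have := abs_sub (v) (w)
    nlinarith [abs_sub_abs_le_abs_sub w v, abs_sub_comm w v, abs_nonneg (v-w)]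
  have ht : 0 ≤ |v - w| := abs_nonneg _
  have hv : 0 ≤ |v| := abs_nonneg _
  calc |y - spow v 2| * |v - w| ≤ ((|w| + |v|) * |v - w|) * |v - w| := by
        rw [← h2]; exact mul_le_mul_of_nonneg_right h1 (by rw [h2]; exact ht)
    _ ≤ 2 * |v| ^ 3 + 3 * |v - w| ^ 3 := by
        nlinarith [sq_nonneg (|v| - |v - w|), mul_nonneg hv ht, mul_nonneg (mul_nonneg hv ht) ht, mul_nonneg (mul_nonneg ht ht) ht, sq_nonneg (|v| + |v - w|), mul_nonneg hv (sq_nonneg (|v| - |v-w|)), mul_nonneg ht (sq_nonneg (|v| - |v-w|))]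
end
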